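/- arXiv:1310.5429 — 2 statements merged into one kernel-verified Lean document; each statement's English description precedes it below -/
import Mathlib

section
/- Let 𝒞 be a family of normalized Schauder basic sequences (represented as norms on c00) satisfying: (i) for every (x_n)_n and (y_n)_n in 𝒞 there exists (z_n)_n in 𝒞 which 2-dominates both (x_n)_n and (y_n)_n; and (ii) for every sequence (c_k)_k of positive reals with Σ_k c_k^{-1} < ∞ and every sequence (x_n^1)_n, (x_n^2)_n, … in 𝒞 there exist (x_n)_n in 𝒞 and a constant K with sup_k c_k^{-1} ≤ K ≤ Σ_k c_k^{-1} such that (a) (x_n)_n (c_k K)-dominates (x_n^k)_n for every k ∈ ℕ, and (b) for every l ∈ ℕ and all a_1,…,a_l ∈ [−1,1], ‖Σ_{j=1}^l a_j x_j‖ ≤ K^{-1} Σ_k c_k^{-1} ‖Σ_{j=1}^l a_j x_j^k‖. If 𝒞 contains a strictly increasing sequence of length ω with respect to domination, then 𝒞 contains a strictly increasing sequence of length ω₁. -/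
open Set Filter Topology

/-- `nth s i` is the `i`-th least element of the finite set `s`, 1-indexed
(junk value `0` if `i = 0` or `i > |s|`). -/
noncomputable def nth (s : Finset ℕ) (i : ℕ) : ℕ :=
  (s.sort (· ≤ ·)).getD (i - 1) 0

/-- Characteristic function of a finite subset of ℕ. -/
def charFun (s : Finset ℕ) : ℕ → Bool := fun n => decide (n ∈ s)

/-- The topology on finite subsets of ℕ induced from the product topology on `{0,1}^ℕ`
via characteristic functions. -/
instance : TopologicalSpace (Finset ℕ) :=
  TopologicalSpace.induced charFun inferInstance

/-- A family of finite sets is compact if the corresponding set of characteristic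
functions is compact in `{0,1}^ℕ`. -/
def CompactFam (F : Set (Finset ℕ)) : Prop := IsCompact (charFun '' F)

/-- Hereditary family: closed under subsets. -/
def Hereditary (F : Set (Finset ℕ)) : Prop := ∀ s ∈ F, ∀ t, t ⊆ s → t ∈ F

/-- Spreading family. -/
def Spreading (F : Set (Finset ℕ)) : Prop :=
  ∀ s ∈ F, ∀ t : Finset ℕ, t.card = s.card →
    (∀ i, 1 ≤ i → i ≤ s.card → nth s i ≤ nth t i) → t ∈ F

/-- Regular family: compact, hereditary and spreading. -/
def RegularFam (F : Set (Finset ℕ)) : Prop := CompactFam F ∧ Hereditary F ∧ Spreading F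

/-- `s` is an initial segment of `t` (possibly `s = t`). -/
def IsInitialSegment (s t : Finset ℕ) : Prop :=
  s ⊆ t ∧ ∀ a ∈ s, ∀ b ∈ t, b ∉ s → a < b

/-- Thin family: no element is a proper initial segment of another. -/
def ThinFam (F : Set (Finset ℕ)) : Prop :=
  ∀ s ∈ F, ∀ t ∈ F, IsInitialSegment s t → s = t

/-- Regular thin family: the set of maximal elements (under inclusion) of some
regular family. -/
def RegularThin (F : Set (Finset ℕ)) : Prop :=
  ∃ R : Set (Finset ℕ), RegularFam R ∧ F = {s ∈ R | ∀ t ∈ R, s ⊆ t → s = t}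

/-- The closure `ℱ̂` of a family: all subsets of its elements. -/
def closureFam (F : Set (Finset ℕ)) : Set (Finset ℕ) := {s | ∃ t ∈ F, s ⊆ t}

/-- Restriction `ℱ↾L` of a family to the range of `L : ℕ → ℕ`. -/
def restrict (F : Set (Finset ℕ)) (L : ℕ → ℕ) : Set (Finset ℕ) :=
  {s ∈ F | ↑s ⊆ Set.range L}

/-- The order `o(ℱ)` of a regular thin family: the rank of `ℱ̂` partially ordered by
reverse inclusion; equivalently, the rank of `∅` for the relation in which the
predecessors of `t` are its strict supersets in `ℱ̂`.  (Junk value `0` if the relation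
is not well-founded or `∅ ∉ ℱ̂`.) -/
noncomputable def famOrder (F : Set (Finset ℕ)) : Ordinal := by
  classical
  exact if h : WellFounded (fun s t : closureFam F => (t : Finset ℕ) ⊂ (s : Finset ℕ)) then
    (if he : (∅ : Finset ℕ) ∈ closureFam F then (h.apply (⟨∅, he⟩ : closureFam F)).rank else 0)
  else 0

/-- Plegma family of length `l` (given as the first `l` terms of `s`). -/
def IsPlegma (l : ℕ) (s : ℕ → Finset ℕ) : Prop :=
  (∀ i < l, (s i).Nonempty) ∧
  (∀ i j, i < j → j < l → ∀ k, 1 ≤ k → k ≤ min (s i).card (s j).card →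
      nth (s i) k < nth (s j) k) ∧
  (∀ i < l, ∀ j < l, ∀ k, 1 ≤ k → k ≤ min (s i).card ((s j).card - 1) →
      nth (s i) k < nth (s j) (k + 1))

/-- The finitely supported vector `∑_{j<l} a_j e_j` in `c00 = ℕ →₀ ℝ`. -/
noncomputable def comb (a : ℕ → ℝ) (l : ℕ) : ℕ →₀ ℝ :=
  ∑ j ∈ Finset.range l, Finsupp.single j (a j)

variable {X : Type*} [NormedAddCommGroup X] [NormedSpace ℝ X]

/-- The `ℱ`-subsequence `(x_s)_{s ∈ ℱ↾M}` generates the sequence represented by the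
seminorm `ρ` on `c00` as an `ℱ`-spreading model, with respect to `(δ_n)`.
Here `M : ℕ → ℕ` is the (0-indexed) increasing enumeration of an infinite set. -/
def Generates (F : Set (Finset ℕ)) (M : ℕ → ℕ) (x : Finset ℕ → X) (δ : ℕ → ℝ)
    (ρ : Seminorm ℝ (ℕ →₀ ℝ)) : Prop :=
  ∀ k l : ℕ, 1 ≤ k → k ≤ l → ∀ a : ℕ → ℝ, (∀ j, |a j| ≤ 1) →
    ∀ s : ℕ → Finset ℕ, (∀ j < k, s j ∈ restrict F M) → IsPlegma k s →
      M l ≤ nth (s 0) 1 →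
      |‖∑ j ∈ Finset.range k, a j • x (s j)‖ - ρ (comb a k)| ≤ δ l

/-- Joint `ℱ`-model generated by a `k`-tuple `(x^0, …, x^{k-1})` of `ℱ`-sequences;
`x^{i_k(j)}` (1-indexed) corresponds to `x (j % k)` (0-indexed). -/
def JointGenerates (F : Set (Finset ℕ)) (k : ℕ) (x : ℕ → Finset ℕ → X) (M : ℕ → ℕ)
    (δ : ℕ → ℝ) (ρ : Seminorm ℝ (ℕ →₀ ℝ)) : Prop :=
  ∀ m n : ℕ, 1 ≤ m → m ≤ n → ∀ a : ℕ → ℝ, (∀ j, |a j| ≤ 1) →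
    ∀ s : ℕ → Finset ℕ, (∀ j < m, s j ∈ restrict F M) → IsPlegma m s →
      M n ≤ nth (s 0) 1 →
      |‖∑ j ∈ Finset.range m, a j • x (j % k) (s j)‖ - ρ (comb a m)| ≤ δ n

/-- The `ℱ`-subsequence `(x_s)_{s∈ℱ↾L}` is subordinated: `x` extends to a map on
`ℱ̂↾L` that is continuous into `X` with its weak topology. -/
def Subordinated (F : Set (Finset ℕ)) (L : ℕ → ℕ) (x : Finset ℕ → X) : Prop :=
  ∃ φ : Finset ℕ → X,
    Continuous (fun t : {t // t ∈ closureFam F ∧ ↑t ⊆ Set.range L} =>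
      (φ (t : Finset ℕ) : WeakSpace ℝ X)) ∧
    ∀ s ∈ restrict F L, φ s = x s

/-- The `ℱ`-subsequence `(x_s)_{s∈ℱ↾L}` is weakly null. -/
def WeaklyNull (F : Set (Finset ℕ)) (L : ℕ → ℕ) (x : Finset ℕ → X) : Prop :=
  ∀ f : X →L[ℝ] ℝ, ∀ ε : ℝ, 0 < ε → ∃ n₀ : ℕ,
    ∀ s ∈ restrict F L, n₀ ≤ nth s 1 → |f (x s)| < ε

/-- `(δ_n)` is a null sequence of positive reals. -/
def NullPos (δ : ℕ → ℝ) : Prop :=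
  (∀ n, 0 < δ n) ∧ Tendsto δ atTop (𝓝 0)

/-- `SM_ξ^w(X)`: `ρ` represents a `ξ`-order spreading model of `X` generated by a
subordinated weakly null `ℱ`-subsequence, for some regular thin `ℱ` of order `ξ`. -/
def SMw (ξ : Ordinal) (X : Type*) [NormedAddCommGroup X] [NormedSpace ℝ X]
    (ρ : Seminorm ℝ (ℕ →₀ ℝ)) : Prop :=
  ∃ F : Set (Finset ℕ), RegularThin F ∧ famOrder F = ξ ∧
    ∃ M : ℕ → ℕ, StrictMono M ∧ ∃ x : Finset ℕ → X, ∃ δ : ℕ → ℝ, NullPos δ ∧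
      Subordinated F M x ∧ WeaklyNull F M x ∧ Generates F M x δ ρ

/-- `ρ₁` is `C`-dominated by `ρ₂`. -/
def DominatedBy (C : ℝ) (ρ₁ ρ₂ : Seminorm ℝ (ℕ →₀ ℝ)) : Prop :=
  ∀ v : ℕ →₀ ℝ, ρ₁ v ≤ C * ρ₂ v

/-- Domination `ρ₁ ⪯ ρ₂`. -/
def Dom (ρ₁ ρ₂ : Seminorm ℝ (ℕ →₀ ℝ)) : Prop := ∃ C : ℝ, 0 < C ∧ DominatedBy C ρ₁ ρ₂

/-- Equivalence `ρ₁ ∼ ρ₂`. -/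
def EquivSeq (ρ₁ ρ₂ : Seminorm ℝ (ℕ →₀ ℝ)) : Prop := Dom ρ₁ ρ₂ ∧ Dom ρ₂ ρ₁

/-- Strict domination `ρ₁ ≺ ρ₂`. -/
def SDom (ρ₁ ρ₂ : Seminorm ℝ (ℕ →₀ ℝ)) : Prop := Dom ρ₁ ρ₂ ∧ ¬ EquivSeq ρ₁ ρ₂

/-- The image family `L(ℱ) = {L(s) : s ∈ ℱ}`. -/
def mapFam (L : ℕ → ℕ) (F : Set (Finset ℕ)) : Set (Finset ℕ) := (fun s => s.image L) '' F

/-- `ℋ₁ ⊑ ℋ₂`: every element of `ℋ₁` is an initial segment of an element of `ℋ₂`,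
and every element of `ℋ₂` has an initial segment in `ℋ₁`. -/
def Sqsubseteq (H1 H2 : Set (Finset ℕ)) : Prop :=
  (∀ s ∈ H1, ∃ t ∈ H2, IsInitialSegment s t) ∧ (∀ t ∈ H2, ∃ s ∈ H1, IsInitialSegment s t)

/-- The regular thin family of singletons of ℕ (of order 1). -/
def singFam : Set (Finset ℕ) := {s : Finset ℕ | s.card = 1}

/-- The set `[ℕ]^∞` of infinite subsets of ℕ. -/
def NatInf : Type := {S : Set ℕ // S.Infinite}

/-- `[ℕ]^∞` is topologized as a subspace of `{0,1}^ℕ` via characteristic functions. -/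
noncomputable instance : TopologicalSpace NatInf :=
  TopologicalSpace.induced
    (fun S : NatInf => fun n : ℕ => @decide (n ∈ S.1) (Classical.dec _)) inferInstance

/-- The (0-indexed) increasing enumeration of an infinite subset of ℕ. -/
noncomputable def enumInf (S : NatInf) (j : ℕ) : ℕ := Nat.nth (· ∈ S.1) j

abbrev Sem := Seminorm ℝ (ℕ →₀ ℝ)

lemma dom_refl (ρ : Sem) : Dom ρ ρ := ⟨1, one_pos, fun v => by rw [one_mul]⟩

lemma dom_trans {a b c : Sem} (h1 : Dom a b) (h2 : Dom b c) : Dom a c := by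
  obtain ⟨C1, hC1, h1⟩ := h1
  obtain ⟨C2, hC2, h2⟩ := h2
  refine ⟨C1 * C2, mul_pos hC1 hC2, fun v => ?_⟩
  calc a v ≤ C1 * b v := h1 v
    _ ≤ C1 * (C2 * c v) := by
        exact mul_le_mul_of_nonneg_left (h2 v) hC1.le
    _ = C1 * C2 * c v := by ring

lemma sdom_of_dom_sdom {a b c : Sem} (h1 : Dom a b) (h2 : SDom b c) : SDom a c := by
  refine ⟨dom_trans h1 h2.1, fun he => h2.2 ⟨h2.1, dom_trans he.2 h1⟩⟩

lemma sdom_of_sdom_dom {a b c : Sem} (h1 : SDom a b) (h2 : Dom b c) : SDom a c := by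
  refine ⟨dom_trans h1.1 h2, fun he => h1.2 ⟨h1.1, dom_trans h2 he.2⟩⟩

lemma sdom_chain {ρ : ℕ → Sem} (h : ∀ j, SDom (ρ j) (ρ (j+1))) :
    ∀ i j, i < j → SDom (ρ i) (ρ j) := by
  intro i j hij
  induction j with
  | zero => omega
  | succ j ih =>
    rcases Nat.lt_succ_iff_lt_or_eq.1 hij with h' | h'
    · exact sdom_of_sdom_dom (ih h') (h j).1
    · subst h'; exact h i

lemma comb_apply (a : ℕ → ℝ) (l n : ℕ) : comb a l n = if n < l then a n else 0 := by
  classical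
  rw [comb, Finsupp.finset_sum_apply]
  simp only [Finsupp.single_apply]
  rw [Finset.sum_ite_eq' (Finset.range l) n a]
  simp

lemma comb_eq_self (v : ℕ →₀ ℝ) (l : ℕ) (h : ∀ i ∈ v.support, i < l) :
    comb (⇑v) l = v := by
  ext n
  rw [comb_apply]
  split_ifs with hn
  · rfl
  · by_contra hv
    exact hn (h n (Finsupp.mem_support_iff.2 fun h0 => hv h0.symm))

lemma comb_smul (a : ℕ → ℝ) (t : ℝ) (l : ℕ) :
    comb (fun j => t * a j) l = t • comb a l := by
  rw [comb, comb, Finset.smul_sum]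
  refine Finset.sum_congr rfl fun j _ => ?_
  rw [Finsupp.smul_single, smul_eq_mul]

set_option maxHeartbeats 2000000 in
lemma masterLemma (C : Set Sem)
    (hnorm : ∀ ρ ∈ C, ∀ n, ρ (Finsupp.single n 1) = 1)
    (hcountable : ∀ c : ℕ → ℝ, (∀ k, 0 < c k) → (Summable fun k => (c k)⁻¹) →
      ∀ x : ℕ → Seminorm ℝ (ℕ →₀ ℝ), (∀ k, x k ∈ C) →
      ∃ ρ ∈ C, ∃ K : ℝ, (∀ k, (c k)⁻¹ ≤ K) ∧ K ≤ ∑' k, (c k)⁻¹ ∧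
        (∀ k, DominatedBy (c k * K) (x k) ρ) ∧
        (∀ l : ℕ, ∀ a : ℕ → ℝ, (∀ j, |a j| ≤ 1) →
          ρ (comb a l) ≤ K⁻¹ * ∑' k, (c k)⁻¹ * x k (comb a l)))
    (z : ℕ → Sem) (hzC : ∀ n, z n ∈ C) (hz : ∀ m n, m < n → SDom (z m) (z n)) :
    ∃ ρ : ℕ → Sem, (∀ j, ρ j ∈ C) ∧ (∀ i j, i < j → SDom (ρ i) (ρ j)) ∧
      (∀ n j, SDom (z n) (ρ j)) := by
  classical
  -- domination constants along the chain
  have hdomex : ∀ k m : ℕ, ∃ Cc : ℝ, 0 < Cc ∧ (k ≤ m → DominatedBy Cc (z k) (z m)) := by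
    intro k m
    rcases lt_or_ge k m with h | h
    · obtain ⟨Cc, hCc, hd⟩ := (hz k m h).1
      exact ⟨Cc, hCc, fun _ => hd⟩
    · rcases eq_or_lt_of_le h with h' | h'
      · subst h'; exact ⟨1, one_pos, fun _ v => by rw [one_mul]⟩
      · exact ⟨1, one_pos, fun hle => absurd hle (by omega)⟩
  choose D hDpos hD using hdomex
  -- witnesses
  have exW : ∀ m : ℕ, ∀ ε : ℝ, 0 < ε →
      ∃ v : ℕ →₀ ℝ, z m v = 1 ∧ ∀ k, k < m → z k v ≤ ε := by
    intro m ε hε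
    match m with
    | 0 =>
      exact ⟨Finsupp.single 0 1, hnorm (z 0) (hzC 0) 0, fun k hk => by omega⟩
    | m + 1 =>
      set Dm : ℝ := (∑ k ∈ Finset.range (m+1), D k m) + 1 with hDm
      have hDmpos : 0 < Dm := by
        have : 0 ≤ ∑ k ∈ Finset.range (m+1), D k m :=
          Finset.sum_nonneg fun k _ => (hDpos k m).le
        simp only [hDm]; linarith
      have hDmge : ∀ k, k ≤ m → D k m ≤ Dm := by
        intro k hk
        have h1 : D k m ≤ ∑ k ∈ Finset.range (m+1), D k m :=
          Finset.single_le_sum (f := fun k => D k m)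
            (fun i _ => (hDpos i m).le) (Finset.mem_range.2 (by omega))
        simp only [hDm]; linarith
      have hnd : ¬ Dom (z (m+1)) (z m) := by
        intro h
        exact (hz m (m+1) (by omega)).2 ⟨(hz m (m+1) (by omega)).1, h⟩
      rw [Dom] at hnd
      push_neg at hnd
      have h0' := hnd (Dm / ε) (by positivity)
      rw [DominatedBy] at h0'
      push_neg at h0'
      obtain ⟨v0, h0⟩ := h0'
      have hzpos : 0 < z (m+1) v0 := by
        have h1 : 0 ≤ Dm / ε * z m v0 := by positivity
        linarith
      refine ⟨(z (m+1) v0)⁻¹ • v0, ?_, ?_⟩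
      · rw [map_smul_eq_mul, Real.norm_eq_abs, abs_of_pos (inv_pos.2 hzpos), inv_mul_cancel₀ hzpos.ne']
      · intro k hk
        have hk' : k ≤ m := by omega
        have h1 : z k v0 ≤ D k m * z m v0 := hD k m hk' v0
        have h2 : D k m * z m v0 ≤ Dm * z m v0 :=
          mul_le_mul_of_nonneg_right (hDmge k hk') (apply_nonneg _ _)
        have h3 : Dm * z m v0 < ε * z (m+1) v0 := by
          have := h0
          rw [div_mul_eq_mul_div, div_lt_iff₀ hε] at this
          nlinarith
        rw [map_smul_eq_mul, Real.norm_eq_abs, abs_of_pos (inv_pos.2 hzpos)]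
        rw [inv_mul_le_iff₀ hzpos]
        nlinarith
  -- recursive data : γ's and witnesses
  have hnext : ∀ (m : ℕ) (h : ℕ → ℝ × (ℕ →₀ ℝ)), ∃ p : ℝ × (ℕ →₀ ℝ),
      p.1 = 2^(m*m+3*m) * (1 + ∑ k ∈ Finset.range m, |(h k).1| * z m ((h k).2)) ∧
      z m p.2 = 1 ∧ ∀ k, k < m → z k p.2 ≤ ((2:ℝ)^m)⁻¹ / (2 * p.1) := by
    intro m h
    set γ : ℝ := 2^(m*m+3*m) * (1 + ∑ k ∈ Finset.range m, |(h k).1| * z m ((h k).2)) with hγ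
    have hγpos : 0 < γ := by
      have h1 : 0 ≤ ∑ k ∈ Finset.range m, |(h k).1| * z m ((h k).2) :=
        Finset.sum_nonneg fun k _ => mul_nonneg (abs_nonneg _) (apply_nonneg _ _)
      have h2 : (0:ℝ) < 2^(m*m+3*m) := by positivity
      nlinarith
    obtain ⟨v, hv1, hv2⟩ := exW m (((2:ℝ)^m)⁻¹ / (2 * γ)) (by positivity)
    exact ⟨(γ, v), rfl, hv1, hv2⟩
  choose next hnext1 hnext2 hnext3 using hnext
  set A : ℕ → ℕ → ℝ × (ℕ →₀ ℝ) := fun m => Nat.rec (fun _ => (1, 0))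
    (fun m Am => fun k => if k < m then Am k else next m Am) m with hA
  set data : ℕ → ℝ × (ℕ →₀ ℝ) := fun m => next m (A m) with hdata
  have hstab : ∀ m k, k < m → A m k = data k := by
    intro m
    induction m with
    | zero => omega
    | succ m ih =>
      intro k hk
      show (if k < m then A m k else next m (A m)) = data k
      rcases lt_or_ge k m with h | h
      · rw [if_pos h, ih k h]
      · have : k = m := by omega
        subst this
        rw [if_neg (by omega)]
  set γ : ℕ → ℝ := fun m => (data m).1 with hγdef
  set v : ℕ → ℕ →₀ ℝ := fun m => (data m).2 with hvdef
  have hγeq : ∀ m, γ m = 2^(m*m+3*m) * (1 + ∑ k ∈ Finset.range m, |γ k| * z m (v k)) := by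
    intro m
    have h1 := hnext1 m (A m)
    have h2 : ∀ k ∈ Finset.range m, |(A m k).1| * z m ((A m k).2) = |γ k| * z m (v k) := by
      intro k hk
      rw [hstab m k (Finset.mem_range.1 hk)]
    calc γ m = (next m (A m)).1 := rfl
      _ = 2^(m*m+3*m) * (1 + ∑ k ∈ Finset.range m, |(A m k).1| * z m ((A m k).2)) := h1
      _ = 2^(m*m+3*m) * (1 + ∑ k ∈ Finset.range m, |γ k| * z m (v k)) := by
          rw [Finset.sum_congr rfl h2]
  have hγpos : ∀ m, 0 < γ m := by
    intro m
    rw [hγeq m]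
    have h1 : 0 ≤ ∑ k ∈ Finset.range m, |γ k| * z m (v k) :=
      Finset.sum_nonneg fun k _ => mul_nonneg (abs_nonneg _) (apply_nonneg _ _)
    have h2 : (0:ℝ) < 2^(m*m+3*m) := by positivity
    nlinarith
  have hγeq' : ∀ m, γ m = 2^(m*m+3*m) * (1 + ∑ k ∈ Finset.range m, γ k * z m (v k)) := by
    intro m
    rw [hγeq m]
    congr 1
    congr 1
    exact Finset.sum_congr rfl fun k _ => by rw [abs_of_pos (hγpos k)]
  have hγge : ∀ m, (2:ℝ)^(m*m+3*m) ≤ γ m := by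
    intro m
    rw [hγeq' m]
    have h1 : 0 ≤ ∑ k ∈ Finset.range m, γ k * z m (v k) :=
      Finset.sum_nonneg fun k _ => mul_nonneg (hγpos k).le (apply_nonneg _ _)
    nlinarith [pow_pos (zero_lt_two (α := ℝ)) (m*m+3*m)]
  have hγterm : ∀ m k, m < k → 2^(k*k+3*k) * (γ m * z k (v m)) ≤ γ k := by
    intro m k hmk
    rw [hγeq' k]
    have h1 : γ m * z k (v m) ≤ ∑ i ∈ Finset.range k, γ i * z k (v i) :=
      Finset.single_le_sum (f := fun i => γ i * z k (v i))
        (fun i _ => mul_nonneg (hγpos i).le (apply_nonneg _ _)) (Finset.mem_range.2 hmk)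
    nlinarith [pow_pos (zero_lt_two (α := ℝ)) (k*k+3*k)]
  have hv1 : ∀ m, z m (v m) = 1 := fun m => hnext2 m (A m)
  have hv2 : ∀ m k, k < m → z k (v m) ≤ ((2:ℝ)^m)⁻¹ / (2 * γ m) := fun m => hnext3 m (A m)
  clear_value γ v
  clear hγdef hvdef hγeq hstab hdata hA
  clear_value A data
  clear hnext1 hnext2 hnext3 A data next exW hD hDpos D
  -- the constants
  set c : ℕ → ℕ → ℝ := fun j k => γ k / 2^(j*k) with hcdef
  have hcpos : ∀ j k, 0 < c j k := fun j k => div_pos (hγpos k) (by positivity)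
  have hcinv : ∀ j k, (c j k)⁻¹ = 2^(j*k) / γ k := fun j k => by
    simp only [hcdef]; rw [inv_div]
  have hcinvle : ∀ j k, (c j k)⁻¹ ≤ 2^(j*j) / (2:ℝ)^k := by
    intro j k
    rw [hcinv, div_le_div_iff₀ (hγpos k) (by positivity)]
    have hee : j*k + k ≤ j*j + (k*k+3*k) := by
      have h1 : j*k ≤ j*j + k*k := by
        rcases le_total j k with h | h
        · have : j*k ≤ k*k := Nat.mul_le_mul_right k h
          omega
        · have : j*k ≤ j*j := Nat.mul_le_mul_left j h
          omega
      omega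
    have e1 : (2:ℝ)^(j*k + k) ≤ 2^(j*j + (k*k+3*k)) :=
      pow_le_pow_right₀ one_le_two hee
    rw [pow_add, pow_add] at e1
    have h3 := hγge k
    have h4 : (0:ℝ) < 2^(j*j) := by positivity
    nlinarith [mul_le_mul_of_nonneg_left h3 h4.le]
  have hSsum : ∀ j, Summable fun k => (c j k)⁻¹ := by
    intro j
    refine Summable.of_nonneg_of_le (fun k => (inv_pos.2 (hcpos j k)).le) (hcinvle j) ?_
    have h1 : Summable fun k : ℕ => ((2:ℝ)⁻¹)^k :=
      summable_geometric_of_lt_one (by norm_num) (by norm_num)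
    have := h1.mul_left ((2:ℝ)^(j*j))
    refine this.congr fun k => ?_
    rw [div_eq_mul_inv, inv_pow]
  obtain hcount' := fun j => hcountable (c j) (hcpos j) (hSsum j) z hzC
  choose ρ hρC K hK1 hK2 hA' hB0 using hcount'
  have hKpos : ∀ j, 0 < K j := fun j => lt_of_lt_of_le (inv_pos.2 (hcpos j 0)) (hK1 j 0)
  have hc0 : ∀ j, c j 0 = γ 0 := by
    intro j; simp [hcdef]
  have hKinv : ∀ j, (K j)⁻¹ ≤ γ 0 := by
    intro j
    have h1 : (γ 0)⁻¹ ≤ K j := by rw [← hc0 j]; exact hK1 j 0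
    calc (K j)⁻¹ ≤ ((γ 0)⁻¹)⁻¹ := by
          exact inv_anti₀ (inv_pos.2 (hγpos 0)) h1
      _ = γ 0 := inv_inv _
  have hB' : ∀ j (w : ℕ →₀ ℝ), ρ j w ≤ (K j)⁻¹ * ∑' k, (c j k)⁻¹ * z k w := by
    intro j w
    by_cases hw : w = 0
    · subst hw
      simp only [map_zero, mul_zero, tsum_zero]
      simp
    · set l := (w.support.sup id) + 1 with hl
      have hsupp : ∀ i ∈ w.support, i < l :=
        fun i hi => Nat.lt_succ_of_le (Finset.le_sup (f := id) hi)
      set M := ∑ i ∈ Finset.range l, |w i| with hM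
      have hbd : ∀ i, |w i| ≤ M := by
        intro i
        by_cases hi : i ∈ w.support
        · exact Finset.single_le_sum (f := fun i => |w i|) (fun i _ => abs_nonneg _)
            (Finset.mem_range.2 (hsupp i hi))
        · rw [Finsupp.notMem_support_iff.1 hi]
          simp only [abs_zero]
          exact Finset.sum_nonneg fun i _ => abs_nonneg _
      have hMpos : 0 < M := by
        obtain ⟨i, hi⟩ := Finsupp.support_nonempty_iff.2 hw
        have h1 : 0 < |w i| := abs_pos.2 (Finsupp.mem_support_iff.1 hi)
        exact lt_of_lt_of_le h1 (hbd i)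
      have ha : ∀ i, |M⁻¹ * w i| ≤ 1 := by
        intro i
        rw [abs_mul, abs_of_pos (inv_pos.2 hMpos)]
        rw [inv_mul_le_iff₀ hMpos, mul_one]
        exact hbd i
      have hcomb : comb (fun i => M⁻¹ * w i) l = M⁻¹ • w := by
        rw [comb_smul, comb_eq_self w l hsupp]
      have hb := hB0 j l (fun i => M⁻¹ * w i) ha
      rw [hcomb] at hb
      have hρs : ρ j (M⁻¹ • w) = M⁻¹ * ρ j w := by
        rw [map_smul_eq_mul, Real.norm_eq_abs, abs_of_pos (inv_pos.2 hMpos)]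
      have hts : ∑' k, (c j k)⁻¹ * z k (M⁻¹ • w) = M⁻¹ * ∑' k, (c j k)⁻¹ * z k w := by
        rw [← tsum_mul_left]
        refine tsum_congr fun k => ?_
        rw [map_smul_eq_mul, Real.norm_eq_abs, abs_of_pos (inv_pos.2 hMpos)]
        ring
      rw [hρs, hts] at hb
      have hb' : M⁻¹ * ρ j w ≤ M⁻¹ * ((K j)⁻¹ * ∑' k, (c j k)⁻¹ * z k w) := by
        calc M⁻¹ * ρ j w ≤ (K j)⁻¹ * (M⁻¹ * ∑' k, (c j k)⁻¹ * z k w) := hb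
          _ = M⁻¹ * ((K j)⁻¹ * ∑' k, (c j k)⁻¹ * z k w) := by ring
      exact (mul_le_mul_iff_right₀ (inv_pos.2 hMpos)).1 hb'
  have hgeo : Summable fun k : ℕ => ((2:ℝ)⁻¹)^k :=
    summable_geometric_of_lt_one (by norm_num) (by norm_num)
  have hkey : ∀ j m, j ≤ m →
      c (j+1) m * ∑' k, (c j k)⁻¹ * z k (v m) ≤ 3 * ((2:ℝ)^m)⁻¹ := by
    intro j m hjm
    set B : ℕ → ℝ := fun k => ((2:ℝ)^m)⁻¹ * ((2:ℝ)⁻¹)^k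
      + (if k = m then ((2:ℝ)^m)⁻¹ else 0) with hBdef
    have hBsum1 : Summable fun k : ℕ => ((2:ℝ)^m)⁻¹ * ((2:ℝ)⁻¹)^k :=
      hgeo.mul_left _
    have hBsum2 : Summable fun k : ℕ => (if k = m then ((2:ℝ)^m)⁻¹ else 0) := by
      apply summable_of_ne_finset_zero (s := {m})
      intro k hk
      rw [if_neg (by simpa using hk)]
    have hBsum : Summable B := hBsum1.add hBsum2
    have hEB : ∀ k, c (j+1) m * ((c j k)⁻¹ * z k (v m)) ≤ B k := by
      intro k
      have hBk1 : (0:ℝ) ≤ (if k = m then ((2:ℝ)^m)⁻¹ else 0) := by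
        split_ifs <;> positivity
      have hBk2 : (0:ℝ) ≤ ((2:ℝ)^m)⁻¹ * ((2:ℝ)⁻¹)^k := by positivity
      rcases lt_trichotomy k m with hk | hk | hk
      · -- k < m
        have h1 : z k (v m) ≤ ((2:ℝ)^m)⁻¹/(2*γ m) := hv2 m k hk
        have hstep : c (j+1) m * ((c j k)⁻¹ * z k (v m))
            ≤ c (j+1) m * ((c j k)⁻¹ * (((2:ℝ)^m)⁻¹/(2*γ m))) := by
          gcongr
          · exact (hcpos (j+1) m).le
          · exact (inv_pos.2 (hcpos j k)).le
        have hmain : c (j+1) m * ((c j k)⁻¹ * (((2:ℝ)^m)⁻¹/(2*γ m)))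
            ≤ ((2:ℝ)^m)⁻¹ * ((2:ℝ)⁻¹)^k := by
          rw [hcinv]
          simp only [hcdef]
          have e1 : (γ m / 2^((j+1)*m)) * ((2^(j*k)/γ k) * (((2:ℝ)^m)⁻¹/(2*γ m)))
              = 2^(j*k) / (2^((j+1)*m) * γ k * 2^m * 2) := by
            have h1 := (hγpos m).ne'
            have h2 := (hγpos k).ne'
            field_simp
          have e2 : ((2:ℝ)^m)⁻¹ * ((2:ℝ)⁻¹)^k = 1 / (2^m * 2^k) := by
            rw [inv_pow, one_div, mul_inv]
          rw [e1, e2, div_le_div_iff₀ (by have := hγpos k; positivity) (by positivity)]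
          have hjk : j*k ≤ j*m := Nat.mul_le_mul_left j hk.le
          have hexp : j*k + (m + k) ≤ (j+1)*m + (k*k+3*k) + m + 1 := by
            have h2 : (j+1)*m = j*m + m := by ring
            omega
          have e3 : (2:ℝ)^(j*k) * (2^m * 2^k) ≤ 2^((j+1)*m) * 2^(k*k+3*k) * 2^m * 2 := by
            calc (2:ℝ)^(j*k) * (2^m * 2^k) = 2^(j*k + (m + k)) := by
                  rw [pow_add, pow_add]
              _ ≤ 2^((j+1)*m + (k*k+3*k) + m + 1) := pow_le_pow_right₀ one_le_two hexp
              _ = 2^((j+1)*m) * 2^(k*k+3*k) * 2^m * 2 := by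
                  rw [pow_add, pow_add, pow_add, pow_one]
          have e4 : (2:ℝ)^((j+1)*m) * 2^(k*k+3*k) * 2^m * 2
              ≤ 2^((j+1)*m) * γ k * 2^m * 2 := by
            gcongr
            exact hγge k
          nlinarith [e3, e4]
        calc c (j+1) m * ((c j k)⁻¹ * z k (v m))
            ≤ ((2:ℝ)^m)⁻¹ * ((2:ℝ)⁻¹)^k := le_trans hstep hmain
          _ ≤ B k := by rw [hBdef]; exact le_add_of_nonneg_right hBk1
      · -- k = m
        subst hk
        have e1 : c (j+1) k * ((c j k)⁻¹ * z k (v k)) = ((2:ℝ)^k)⁻¹ := by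
          rw [hv1 k, mul_one, hcinv]
          simp only [hcdef]
          have h1 := (hγpos k).ne'
          have hpow : (2:ℝ)^((j+1)*k) = 2^(j*k) * 2^k := by
            rw [← pow_add]; congr 1; ring
          rw [hpow]
          have h3 : ((2:ℝ)^(j*k)) ≠ 0 := by positivity
          have h4 : ((2:ℝ)^k) ≠ 0 := by positivity
          field_simp
        rw [e1, hBdef]
        simp only [if_pos rfl]
        exact le_add_of_nonneg_left hBk2
      · -- k > m
        have h1 := hγterm m k hk
        have hmain : c (j+1) m * ((c j k)⁻¹ * z k (v m))
            ≤ ((2:ℝ)^m)⁻¹ * ((2:ℝ)⁻¹)^k := by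
          rw [hcinv]
          simp only [hcdef]
          have e1 : (γ m / 2^((j+1)*m)) * ((2^(j*k)/γ k) * z k (v m))
              = 2^(j*k) * (γ m * z k (v m)) / (2^((j+1)*m) * γ k) := by
            have h1 := (hγpos m).ne'
            have h2 := (hγpos k).ne'
            field_simp
          have e2 : ((2:ℝ)^m)⁻¹ * ((2:ℝ)⁻¹)^k = 1 / (2^m * 2^k) := by
            rw [inv_pow, one_div, mul_inv]
          rw [e1, e2, div_le_div_iff₀ (by have := hγpos k; positivity) (by positivity)]
          have hjk : j*k ≤ k*k := Nat.mul_le_mul_right k (le_trans hjm hk.le)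
          have hmjm : m ≤ (j+1)*m := Nat.le_mul_of_pos_left m (by omega)
          have hexp : j*k + (m + k) ≤ (j+1)*m + (k*k+3*k) := by omega
          have h3 : (2:ℝ)^(j*k) * (2^m * 2^k) ≤ 2^((j+1)*m) * 2^(k*k+3*k) := by
            calc (2:ℝ)^(j*k) * (2^m * 2^k) = 2^(j*k + (m + k)) := by
                  rw [pow_add, pow_add]
              _ ≤ 2^((j+1)*m + (k*k+3*k)) := pow_le_pow_right₀ one_le_two hexp
              _ = 2^((j+1)*m) * 2^(k*k+3*k) := by rw [pow_add]
          have hQ : (0:ℝ) ≤ γ m * z k (v m) :=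
            mul_nonneg (hγpos m).le (apply_nonneg _ _)
          have hS : (0:ℝ) < 2^((j+1)*m) := by positivity
          nlinarith [mul_le_mul_of_nonneg_right h3 hQ, mul_le_mul_of_nonneg_left h1 hS.le]
        calc c (j+1) m * ((c j k)⁻¹ * z k (v m))
            ≤ ((2:ℝ)^m)⁻¹ * ((2:ℝ)⁻¹)^k := hmain
          _ ≤ B k := by rw [hBdef]; exact le_add_of_nonneg_right hBk1
    have hEnn : ∀ k, 0 ≤ c (j+1) m * ((c j k)⁻¹ * z k (v m)) := fun k =>
      mul_nonneg (hcpos (j+1) m).le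
        (mul_nonneg (inv_pos.2 (hcpos j k)).le (apply_nonneg _ _))
    have hEsum : Summable fun k => c (j+1) m * ((c j k)⁻¹ * z k (v m)) :=
      Summable.of_nonneg_of_le hEnn hEB hBsum
    calc c (j+1) m * ∑' k, (c j k)⁻¹ * z k (v m)
        = ∑' k, c (j+1) m * ((c j k)⁻¹ * z k (v m)) := (tsum_mul_left).symm
      _ ≤ ∑' k, B k := Summable.tsum_le_tsum hEB hEsum hBsum
      _ = ((2:ℝ)^m)⁻¹ * (1 - 2⁻¹)⁻¹ + ((2:ℝ)^m)⁻¹ := by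
          rw [hBdef, Summable.tsum_add hBsum1 hBsum2, tsum_mul_left,
            tsum_geometric_of_lt_one (by norm_num) (by norm_num), tsum_ite_eq]
      _ ≤ 3 * ((2:ℝ)^m)⁻¹ := by
          have : ((1:ℝ) - 2⁻¹)⁻¹ = 2 := by norm_num
          rw [this]
          have : (0:ℝ) ≤ ((2:ℝ)^m)⁻¹ := by positivity
          linarith
  have hcc : ∀ j k, (c j k)⁻¹ * c (j+1) k = ((2:ℝ)⁻¹)^k := by
    intro j k
    rw [hcinv]
    simp only [hcdef]
    have h1 := (hγpos k).ne'
    have hpow : (2:ℝ)^((j+1)*k) = 2^(j*k) * 2^k := by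
      rw [← pow_add]; congr 1; ring
    rw [hpow, inv_pow]
    have h3 : ((2:ℝ)^(j*k)) ≠ 0 := by positivity
    have h4 : ((2:ℝ)^k) ≠ 0 := by positivity
    field_simp
  have hdomsucc : ∀ j, Dom (ρ j) (ρ (j+1)) := by
    intro j
    refine ⟨(K j)⁻¹ * (2 * K (j+1)),
      by have := hKpos j; have := hKpos (j+1); positivity, fun w => ?_⟩
    have h1 := hB' j w
    have hterm : ∀ k, (c j k)⁻¹ * z k w
        ≤ ((2:ℝ)⁻¹)^k * (K (j+1) * ρ (j+1) w) := by
      intro k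
      have h2 : z k w ≤ c (j+1) k * K (j+1) * ρ (j+1) w := hA' (j+1) k w
      calc (c j k)⁻¹ * z k w ≤ (c j k)⁻¹ * (c (j+1) k * K (j+1) * ρ (j+1) w) :=
            mul_le_mul_of_nonneg_left h2 (inv_pos.2 (hcpos j k)).le
        _ = ((c j k)⁻¹ * c (j+1) k) * (K (j+1) * ρ (j+1) w) := by ring
        _ = ((2:ℝ)⁻¹)^k * (K (j+1) * ρ (j+1) w) := by rw [hcc j k]
    have hsum2 : Summable fun k : ℕ => ((2:ℝ)⁻¹)^k * (K (j+1) * ρ (j+1) w) :=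
      hgeo.mul_right _
    have hsum1 : Summable fun k => (c j k)⁻¹ * z k w :=
      Summable.of_nonneg_of_le
        (fun k => mul_nonneg (inv_pos.2 (hcpos j k)).le (apply_nonneg _ _)) hterm hsum2
    have h3 : ∑' k, (c j k)⁻¹ * z k w ≤ ∑' k, ((2:ℝ)⁻¹)^k * (K (j+1) * ρ (j+1) w) :=
      Summable.tsum_le_tsum hterm hsum1 hsum2
    have h4 : ∑' k, ((2:ℝ)⁻¹)^k * (K (j+1) * ρ (j+1) w)
        = 2 * (K (j+1) * ρ (j+1) w) := by
      rw [tsum_mul_right, tsum_geometric_of_lt_one (by norm_num) (by norm_num)]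
      norm_num
    calc ρ j w ≤ (K j)⁻¹ * ∑' k, (c j k)⁻¹ * z k w := h1
      _ ≤ (K j)⁻¹ * (2 * (K (j+1) * ρ (j+1) w)) := by
          rw [h4] at h3
          exact mul_le_mul_of_nonneg_left h3 (inv_pos.2 (hKpos j)).le
      _ = (K j)⁻¹ * (2 * K (j+1)) * ρ (j+1) w := by ring
  have hnotdom : ∀ j, ¬ Dom (ρ (j+1)) (ρ j) := by
    intro j hdj
    obtain ⟨Cc, hCc, hd⟩ := hdj
    set S' : ℝ := ∑' k, (c (j+1) k)⁻¹ with hS'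
    have hS'pos : 0 < S' := lt_of_lt_of_le (hKpos (j+1)) (hK2 (j+1))
    obtain ⟨m0, hm0⟩ := pow_unbounded_of_one_lt (3 * Cc * γ 0 * S') (one_lt_two (α := ℝ))
    set m := max j m0 with hm
    have hm2 : 3 * Cc * γ 0 * S' < 2^m :=
      lt_of_lt_of_le hm0 (pow_le_pow_right₀ one_le_two (le_max_right _ _))
    have h1 : (1:ℝ) ≤ c (j+1) m * K (j+1) * ρ (j+1) (v m) := by
      rw [← hv1 m]; exact hA' (j+1) m (v m)
    have h2 : ρ (j+1) (v m) ≤ Cc * ρ j (v m) := hd (v m)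
    have h3 : ρ j (v m) ≤ (K j)⁻¹ * ∑' k, (c j k)⁻¹ * z k (v m) := hB' j (v m)
    have h4 : c (j+1) m * ∑' k, (c j k)⁻¹ * z k (v m) ≤ 3 * ((2:ℝ)^m)⁻¹ :=
      hkey j m (le_max_left _ _)
    set T : ℝ := ∑' k, (c j k)⁻¹ * z k (v m) with hT
    have hTnn : 0 ≤ T :=
      tsum_nonneg fun k => mul_nonneg (inv_pos.2 (hcpos j k)).le (apply_nonneg _ _)
    have hρnn : 0 ≤ ρ j (v m) := apply_nonneg _ _
    have hc1 : 0 < c (j+1) m := hcpos (j+1) m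
    have step1 : (1:ℝ) ≤ c (j+1) m * K (j+1) * (Cc * ((K j)⁻¹ * T)) := by
      calc (1:ℝ) ≤ c (j+1) m * K (j+1) * ρ (j+1) (v m) := h1
        _ ≤ c (j+1) m * K (j+1) * (Cc * ρ j (v m)) := by
            exact mul_le_mul_of_nonneg_left h2 (mul_nonneg hc1.le (hKpos (j+1)).le)
        _ ≤ c (j+1) m * K (j+1) * (Cc * ((K j)⁻¹ * T)) := by
            refine mul_le_mul_of_nonneg_left ?_ (mul_nonneg hc1.le (hKpos (j+1)).le)
            exact mul_le_mul_of_nonneg_left h3 hCc.le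
    have step2 : c (j+1) m * K (j+1) * (Cc * ((K j)⁻¹ * T))
        = (K (j+1) * Cc * (K j)⁻¹) * (c (j+1) m * T) := by ring
    have step3 : (K (j+1) * Cc * (K j)⁻¹) * (c (j+1) m * T)
        ≤ (K (j+1) * Cc * (K j)⁻¹) * (3 * ((2:ℝ)^m)⁻¹) := by
      refine mul_le_mul_of_nonneg_left h4 ?_
      have := hKpos (j+1)
      have := hKpos j
      positivity
    have step4 : (K (j+1) * Cc * (K j)⁻¹) * (3 * ((2:ℝ)^m)⁻¹)
        ≤ (S' * Cc * γ 0) * (3 * ((2:ℝ)^m)⁻¹) := by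
      refine mul_le_mul_of_nonneg_right ?_ (by positivity)
      have hg0 : 0 < γ 0 := hγpos 0
      have := hKpos (j+1)
      have h5 := hK2 (j+1)
      have h6 := hKinv j
      have h7 : 0 < (K j)⁻¹ := inv_pos.2 (hKpos j)
      rw [← hS'] at h5
      nlinarith [mul_le_mul h5 h6 h7.le hS'pos.le, hCc.le]
    have step5 : (S' * Cc * γ 0) * (3 * ((2:ℝ)^m)⁻¹) < 1 := by
      have hp : (0:ℝ) < 2^m := by positivity
      have he : (S' * Cc * γ 0) * (3 * ((2:ℝ)^m)⁻¹)
          = (3 * Cc * γ 0 * S') / 2^m := by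
        rw [div_eq_mul_inv]; ring
      rw [he, div_lt_one hp]
      exact hm2
    linarith [le_trans (le_trans (step1.trans_eq step2) step3) step4]
  refine ⟨ρ, hρC, sdom_chain (fun j => ⟨hdomsucc j, fun he => hnotdom j he.2⟩), ?_⟩
  intro n j
  have hdznρ : ∀ n', Dom (z n') (ρ j) :=
    fun n' => ⟨c j n' * K j, mul_pos (hcpos j n') (hKpos j), hA' j n'⟩
  refine ⟨hdznρ n, fun he => ?_⟩
  have hd2 : Dom (z (n+1)) (z n) := dom_trans (hdznρ (n+1)) he.2
  exact (hz n (n+1) (by omega)).2 ⟨(hz n (n+1) (by omega)).1, hd2⟩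

lemma cofinalChain (C : Set Sem) (S : Set Sem) (hSC : S ⊆ C) (hcnt : S.Countable)
    (hne : S.Nonempty)
    (htot : ∀ p ∈ S, ∀ q ∈ S, Dom p q ∨ Dom q p)
    (hsucc : ∀ p ∈ S, ∃ q ∈ S, SDom p q) :
    ∃ w : ℕ → Sem, (∀ n, w n ∈ C) ∧ (∀ m n, m < n → SDom (w m) (w n)) ∧
      ∀ p ∈ S, ∃ i, Dom p (w i) := by
  classical
  obtain ⟨e, he⟩ := hcnt.exists_eq_range hne
  have heS : ∀ n, e n ∈ S := fun n => he ▸ Set.mem_range_self n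
  have hstep : ∀ p : Sem, p ∈ S → ∃ q, q ∈ S ∧ SDom p q := by
    intro p hp; obtain ⟨q, hq, h⟩ := hsucc p hp; exact ⟨q, hq, h⟩
  choose sc hscS hscD using hstep
  let u : {p : Sem // p ∈ S} → ℕ → {p : Sem // p ∈ S} := fun pr n =>
    if Dom pr.1 (e n) then ⟨e n, heS n⟩ else pr
  let w : ℕ → {p : Sem // p ∈ S} := fun n => Nat.rec
    ⟨sc (e 0) (heS 0), hscS _ _⟩
    (fun n pr => ⟨sc (u pr (n+1)).1 (u pr (n+1)).2, hscS _ _⟩) n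
  have hwsucc : ∀ n, w (n+1) = ⟨sc (u (w n) (n+1)).1 (u (w n) (n+1)).2, hscS _ _⟩ :=
    fun n => rfl
  have hdomu : ∀ n, Dom (w n).1 (u (w n) (n+1)).1 := by
    intro n
    show Dom (w n).1 (if Dom (w n).1 (e (n+1)) then (⟨e (n+1), heS (n+1)⟩ :
      {p : Sem // p ∈ S}) else w n).1
    split_ifs with h
    · exact h
    · exact dom_refl _
  have hdome : ∀ n, Dom (e (n+1)) (u (w n) (n+1)).1 := by
    intro n
    show Dom (e (n+1)) (if Dom (w n).1 (e (n+1)) then (⟨e (n+1), heS (n+1)⟩ :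
      {p : Sem // p ∈ S}) else w n).1
    split_ifs with h
    · exact dom_refl _
    · rcases htot (w n).1 (w n).2 (e (n+1)) (heS (n+1)) with h' | h'
      · exact absurd h' h
      · exact h'
  have hwchain : ∀ n, SDom (w n).1 (w (n+1)).1 := by
    intro n
    rw [hwsucc n]
    exact sdom_of_dom_sdom (hdomu n) (hscD _ _)
  have hcof : ∀ n, Dom (e n) (w n).1 := by
    intro n
    match n with
    | 0 => exact (hscD (e 0) (heS 0)).1
    | n + 1 =>
      rw [hwsucc n]
      exact dom_trans (hdome n) (hscD _ _).1
  refine ⟨fun n => (w n).1, fun n => hSC (w n).2,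
    sdom_chain (fun n => hwchain n), ?_⟩
  intro p hp
  rw [he] at hp
  obtain ⟨n, rfl⟩ := hp
  exact ⟨n, hcof n⟩

/-- Theorem 20. -/
theorem statement9 (C : Set (Seminorm ℝ (ℕ →₀ ℝ)))
    (hbasic : ∀ ρ ∈ C, (∀ n, ρ (Finsupp.single n 1) = 1) ∧
      ∃ K : ℝ, 1 ≤ K ∧ ∀ m n : ℕ, m ≤ n → ∀ a : ℕ → ℝ, ρ (comb a m) ≤ K * ρ (comb a n))
    (hpair : ∀ ρ₁ ∈ C, ∀ ρ₂ ∈ C, ∃ ρ ∈ C, DominatedBy 2 ρ₁ ρ ∧ DominatedBy 2 ρ₂ ρ)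
    (hcountable : ∀ c : ℕ → ℝ, (∀ k, 0 < c k) → (Summable fun k => (c k)⁻¹) →
      ∀ x : ℕ → Seminorm ℝ (ℕ →₀ ℝ), (∀ k, x k ∈ C) →
      ∃ ρ ∈ C, ∃ K : ℝ, (∀ k, (c k)⁻¹ ≤ K) ∧ K ≤ ∑' k, (c k)⁻¹ ∧
        (∀ k, DominatedBy (c k * K) (x k) ρ) ∧
        (∀ l : ℕ, ∀ a : ℕ → ℝ, (∀ j, |a j| ≤ 1) →
          ρ (comb a l) ≤ K⁻¹ * ∑' k, (c k)⁻¹ * x k (comb a l)))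
    (hω : ∃ f : ℕ → Seminorm ℝ (ℕ →₀ ℝ), (∀ n, f n ∈ C) ∧
      ∀ m n : ℕ, m < n → SDom (f m) (f n)) :
    ∃ g : Ordinal → Seminorm ℝ (ℕ →₀ ℝ), (∀ α < (Cardinal.aleph 1).ord, g α ∈ C) ∧
      ∀ α β : Ordinal, α < β → β < (Cardinal.aleph 1).ord → SDom (g α) (g β) := by
  classical
  obtain ⟨f, hfC, hf⟩ := hω
  have hmaster := masterLemma C (fun ρ hρ => (hbasic ρ hρ).1) hcountable
  -- countability of initial segments
  have hcntIio : ∀ α : Ordinal, α < (Cardinal.aleph 1).ord → (Set.Iio α).Countable := by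
    intro α hα
    rw [Cardinal.countable_iff_lt_aleph_one, Ordinal.mk_Iio_ordinal]
    have h1 : α.card < Cardinal.aleph 1 := Cardinal.lt_ord.1 hα
    have h2 := (Cardinal.lift_lt (b := Cardinal.aleph 1)).2 h1
    simpa [Cardinal.lift_aleph] using h2
  -- the inductive step
  have stepEx : ∀ (α : Ordinal), α < (Cardinal.aleph 1).ord →
      ∀ g : (β : Ordinal) → β < α → ℕ → Sem,
      (∀ β (h : β < α), (∀ n, g β h n ∈ C) ∧ (∀ i j, i < j → SDom (g β h i) (g β h j))) →
      (∀ β γ' (h1 : β < γ') (h2 : γ' < α), ∀ n, SDom (g β (h1.trans h2) n) (g γ' h2 0)) →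
      ∃ Y : ℕ → Sem, ((∀ n, Y n ∈ C) ∧ (∀ i j, i < j → SDom (Y i) (Y j))) ∧
        ∀ β (h : β < α), ∀ n, SDom (g β h n) (Y 0) := by
    intro α hα g hg1 hg2
    rcases eq_or_ne α 0 with rfl | hα0
    · obtain ⟨Y, hY1, hY2, _⟩ := hmaster f hfC hf
      exact ⟨Y, ⟨hY1, hY2⟩, fun β hβ => absurd hβ (by simp)⟩
    · have hα0' : 0 < α := pos_iff_ne_zero.2 hα0
      haveI : Countable (Set.Iio α) := (hcntIio α hα).to_subtype
      set S : Set Sem :=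
        Set.range (fun q : (Set.Iio α) × ℕ => g q.1.1 q.1.2 q.2) with hS
      have hmem : ∀ β (h : β < α) n, g β h n ∈ S := fun β h n =>
        ⟨(⟨β, h⟩, n), rfl⟩
      have hScnt : S.Countable := Set.countable_range _
      have hSne : S.Nonempty := ⟨g 0 hα0' 0, hmem 0 hα0' 0⟩
      have hSC : S ⊆ C := by
        rintro p ⟨⟨⟨β, hβ⟩, n⟩, rfl⟩
        exact (hg1 β hβ).1 n
      -- cross domination
      have hcross : ∀ β (hβ : β < α) γ' (hγ : γ' < α) n n', β < γ' →
          Dom (g β hβ n) (g γ' hγ n') := by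
        intro β hβ γ' hγ n n' hlt
        have h1 : Dom (g β hβ n) (g γ' hγ 0) := by
          have := (hg2 β γ' hlt hγ n).1
          exact this
        rcases Nat.eq_zero_or_pos n' with rfl | hn'
        · exact h1
        · exact dom_trans h1 ((hg1 γ' hγ).2 0 n' hn').1
      have htot : ∀ p ∈ S, ∀ q ∈ S, Dom p q ∨ Dom q p := by
        rintro p ⟨⟨⟨β, hβ⟩, n⟩, rfl⟩ q ⟨⟨⟨β', hβ'⟩, n'⟩, rfl⟩
        rcases lt_trichotomy β β' with h | h | h
        · exact Or.inl (hcross β hβ β' hβ' n n' h)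
        · subst h
          rcases lt_trichotomy n n' with h' | h' | h'
          · exact Or.inl ((hg1 β hβ).2 n n' h').1
          · subst h'
            exact Or.inl (dom_refl _)
          · exact Or.inr ((hg1 β hβ').2 n' n h').1
        · exact Or.inr (hcross β' hβ' β hβ n' n h)
      have hsucc : ∀ p ∈ S, ∃ q ∈ S, SDom p q := by
        rintro p ⟨⟨⟨β, hβ⟩, n⟩, rfl⟩
        exact ⟨g β hβ (n+1), hmem β hβ (n+1), (hg1 β hβ).2 n (n+1) (by omega)⟩
      obtain ⟨w, hwC, hwch, hwcof⟩ := cofinalChain C S hSC hScnt hSne htot hsucc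
      obtain ⟨Y, hYC, hYch, hYdom⟩ := hmaster w hwC hwch
      refine ⟨Y, ⟨hYC, hYch⟩, ?_⟩
      intro β h n
      obtain ⟨i, hi⟩ := hwcof (g β h n) (hmem β h n)
      exact sdom_of_dom_sdom hi (hYdom i 0)
  -- transfinite recursion
  let Y : Ordinal → ℕ → Sem := Ordinal.lt_wf.fix
    (fun α IH =>
      if h : ∃ Yc : ℕ → Sem, ((∀ n, Yc n ∈ C) ∧ (∀ i j, i < j → SDom (Yc i) (Yc j))) ∧
          ∀ β (hb : β < α), ∀ n, SDom (IH β hb n) (Yc 0)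
      then h.choose else fun _ => 0)
  have hYeq : ∀ α, Y α =
      if h : ∃ Yc : ℕ → Sem, ((∀ n, Yc n ∈ C) ∧ (∀ i j, i < j → SDom (Yc i) (Yc j))) ∧
          ∀ β (hb : β < α), ∀ n, SDom (Y β n) (Yc 0)
      then h.choose else fun _ => 0 :=
    fun α => WellFounded.fix_eq _ _ α
  have hinv : ∀ α, α < (Cardinal.aleph 1).ord →
      ((∀ n, Y α n ∈ C) ∧ (∀ i j, i < j → SDom (Y α i) (Y α j))) ∧
      (∀ β, β < α → ∀ n, SDom (Y β n) (Y α 0)) := by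
    intro α
    induction α using Ordinal.induction with
    | _ α IH =>
      intro hα
      have hent : ∃ Yc : ℕ → Sem,
          ((∀ n, Yc n ∈ C) ∧ (∀ i j, i < j → SDom (Yc i) (Yc j))) ∧
          ∀ β (hb : β < α), ∀ n, SDom (Y β n) (Yc 0) := by
        refine stepEx α hα (fun β _ => Y β)
          (fun β h => (IH β h (h.trans hα)).1)
          (fun β γ' h1 h2 n => (IH γ' h2 (h2.trans hα)).2 β h1 n)
      rw [hYeq α, dif_pos hent]
      exact ⟨hent.choose_spec.1, fun β hb n => hent.choose_spec.2 β hb n⟩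
  refine ⟨fun α => Y α 0, fun α hα => ((hinv α hα).1).1 0, ?_⟩
  intro α β hαβ hβ
  exact (hinv β hβ).2 α hαβ 0
end

section
/- Let ℱ be a regular thin family, L an infinite subset of ℕ and k a positive integer. Then for every finite partition of Bl_k(ℱ↾L) into finitely many pieces there exists an infinite subset L' of L such that Bl_k(ℱ↾L') is entirely contained in one piece of the partition. -/
open Set Filter Topology

variable {X : Type*} [NormedAddCommGroup X] [NormedSpace ℝ X]

namespace NWaux

/-- generic recursive chain construction -/
lemma rec_chain {α : Type*} (P : α → Prop) (R : α → α → Prop) (a0 : α) (h0 : P a0)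
    (step : ∀ a, P a → ∃ b, P b ∧ R a b) :
    ∃ f : ℕ → α, f 0 = a0 ∧ (∀ n, P (f n)) ∧ ∀ n, R (f n) (f (n + 1)) := by
  choose g hg1 hg2 using step
  let Fc : ℕ → {a // P a} := fun n =>
    Nat.rec (⟨a0, h0⟩ : {a // P a}) (fun _ q => ⟨g q.1 q.2, hg1 q.1 q.2⟩) n
  exact ⟨fun n => (Fc n).1, rfl, fun n => (Fc n).2, fun n => hg2 (Fc n).1 (Fc n).2⟩

def above (s : Finset ℕ) (M : Set ℕ) : Set ℕ := {n | n ∈ M ∧ ∀ a ∈ s, a < n}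

lemma above_subset (s : Finset ℕ) (M : Set ℕ) : above s M ⊆ M := fun _ h => h.1

lemma above_mono {M' M : Set ℕ} (h : M' ⊆ M) (s : Finset ℕ) : above s M' ⊆ above s M :=
  fun x hx => ⟨h hx.1, hx.2⟩

lemma diff_subset_above (s : Finset ℕ) (M : Set ℕ) : M \ Set.Iic (s.sup id) ⊆ above s M := by
  intro x hx
  exact ⟨hx.1, fun a ha => lt_of_le_of_lt (Finset.le_sup (f := id) ha) (not_le.mp hx.2)⟩

lemma above_infinite {M : Set ℕ} (hM : M.Infinite) (s : Finset ℕ) : (above s M).Infinite :=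
  ((hM.diff (Set.finite_Iic _)).mono (diff_subset_above s M))

/-- `s` is an initial segment of the (typically infinite) set `N`. -/
def segS (s : Finset ℕ) (N : Set ℕ) : Prop :=
  ↑s ⊆ N ∧ ∀ n ∈ N, n ∉ s → ∀ a ∈ s, a < n

def GAcc (B : Set (Finset ℕ)) (s : Finset ℕ) (M : Set ℕ) : Prop :=
  ∀ N : Set ℕ, N.Infinite → N ⊆ ↑s ∪ above s M → segS s N → ∃ t ∈ B, segS t N

def GRej (B : Set (Finset ℕ)) (s : Finset ℕ) (M : Set ℕ) : Prop :=
  ∀ N : Set ℕ, N ⊆ M → N.Infinite → ¬ GAcc B s N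

lemma acc_of_mem {B : Set (Finset ℕ)} {s : Finset ℕ} {M : Set ℕ} (h : s ∈ B) :
    GAcc B s M := fun _N _ _ hseg => ⟨s, h, hseg⟩

lemma acc_mono {B s M' M} (h : above s M' ⊆ above s M) : GAcc B s M → GAcc B s M' :=
  fun ha N hN hsub hseg => ha N hN (hsub.trans (Set.union_subset_union_right _ h)) hseg

lemma acc_transfer {B s M' M2} (h : above s M' ⊆ M2) : GAcc B s M2 → GAcc B s M' :=
  acc_mono (fun x hx => ⟨h hx, hx.2⟩)

lemma rej_mono {B s M' M} (h : M' ⊆ M) : GRej B s M → GRej B s M' :=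
  fun hr N hsub => hr N (hsub.trans h)

lemma rej_transfer {B s M' M2} (h : above s M' ⊆ M2) (hr : GRej B s M2) : GRej B s M' := by
  intro N hsub hN hacc
  refine hr (above s N) ((above_mono hsub s).trans h) ?_ ?_
  · exact above_infinite hN s
  · exact acc_mono (fun x hx => hx.1) hacc

lemma decide_one (B : Set (Finset ℕ)) (s : Finset ℕ) {M : Set ℕ} (hM : M.Infinite) :
    ∃ N, N ⊆ M ∧ N.Infinite ∧ (GAcc B s N ∨ GRej B s N) := by
  by_cases h : GRej B s M
  · exact ⟨M, subset_rfl, hM, Or.inr h⟩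
  · simp only [GRej, not_forall, not_not] at h
    obtain ⟨N, hsub, hinf, hacc⟩ := h
    exact ⟨N, hsub, hinf, Or.inl hacc⟩

lemma decide_family (B : Set (Finset ℕ)) (S : Finset (Finset ℕ)) :
    ∀ M : Set ℕ, M.Infinite → ∃ N, N ⊆ M ∧ N.Infinite ∧ ∀ s ∈ S, GAcc B s N ∨ GRej B s N := by
  classical
  induction S using Finset.induction_on with
  | empty => intro M hM; exact ⟨M, subset_rfl, hM, by simp⟩
  | insert _ _ ha ih =>
    rename_i a S
    intro M hM
    obtain ⟨N, hNM, hNinf, hdec⟩ := ih M hM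
    obtain ⟨N', hN'N, hN'inf, hdec'⟩ := decide_one B a hNinf
    refine ⟨N', hN'N.trans hNM, hN'inf, ?_⟩
    intro s hs
    rcases Finset.mem_insert.mp hs with rfl | hs
    · exact hdec'
    · rcases hdec s hs with h | h
      · exact Or.inl (acc_mono (above_mono hN'N s) h)
      · exact Or.inr (rej_mono hN'N h)



lemma key_finite (B : Set (Finset ℕ)) (s : Finset ℕ) {M : Set ℕ} (hr : GRej B s M) :
    {x | x ∈ above s M ∧ GAcc B (insert x s) M}.Finite := by
  by_contra hfin
  have hA : {x | x ∈ above s M ∧ GAcc B (insert x s) M}.Infinite := hfin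
  refine hr _ (fun x hx => hx.1.1) hA ?_
  intro N hNinf hNsub hNseg
  have hne : (N \ ↑s).Nonempty := (hNinf.diff s.finite_toSet).nonempty
  set x := sInf (N \ ↑s) with hxdef
  have hxmem : x ∈ N \ ↑s := Nat.sInf_mem hne
  have hxA : x ∈ {x | x ∈ above s M ∧ GAcc B (insert x s) M} := by
    rcases hNsub hxmem.1 with h | h
    · exact absurd h hxmem.2
    · exact above_subset _ _ h
  have hgts : ∀ n ∈ N, n ∉ s → ∀ a ∈ (insert x s : Finset ℕ), n ≠ x → a < n := by
    intro n hn hns a ha hnx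
    rcases Finset.mem_insert.mp ha with rfl | ha
    · exact lt_of_le_of_ne (Nat.sInf_le ⟨hn, hns⟩) (Ne.symm hnx)
    · exact hNseg.2 n hn hns a ha
  refine hxA.2 N hNinf ?_ ?_
  · intro n hn
    by_cases hmem : n ∈ (insert x s : Finset ℕ)
    · exact Or.inl hmem
    · have hns : n ∉ s := fun h => hmem (Finset.mem_insert_of_mem h)
      have hnx : n ≠ x := fun h => hmem (h ▸ Finset.mem_insert_self _ _)
      have hnM : n ∈ M := by
        rcases hNsub hn with h | h
        · exact absurd h hns
        · exact (above_subset _ _ h).1.1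
      exact Or.inr ⟨hnM, fun a ha => hgts n hn hns a ha hnx⟩
  · constructor
    · intro n hn
      rcases Finset.mem_insert.mp (by exact_mod_cast hn) with rfl | h
      · exact hxmem.1
      · exact hNseg.1 h
    · intro n hn hns a ha
      have hns' : n ∉ s := fun h => hns (Finset.mem_insert_of_mem h)
      have hnx : n ≠ x := fun h => hns (h ▸ Finset.mem_insert_self _ _)
      exact hgts n hn hns' a ha hnx

lemma exists_decider (B : Set (Finset ℕ)) (L0 : Set ℕ) (hL0 : L0.Infinite) :
    ∃ M, M ⊆ L0 ∧ M.Infinite ∧ ∀ s : Finset ℕ, ↑s ⊆ M → GAcc B s M ∨ GRej B s M := by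
  classical
  set Inv : Finset ℕ × Set ℕ → Prop := fun q =>
    q.2.Infinite ∧ q.2 ⊆ L0 ∧ (∀ a ∈ q.1, ∀ n ∈ q.2, a < n) ∧
      (∀ t : Finset ℕ, t ⊆ q.1 → GAcc B t q.2 ∨ GRej B t q.2) with hInvdef
  set Rel : Finset ℕ × Set ℕ → Finset ℕ × Set ℕ → Prop := fun q q' =>
    q'.2 ⊆ q.2 ∧ q'.1 = insert (sInf q.2) q.1 ∧ ∀ n ∈ q'.2, sInf q.2 < n with hReldef
  obtain ⟨N0, hN0L, hN0inf, hN0dec⟩ := decide_family B {∅} L0 hL0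
  have h0 : Inv (∅, N0) := by
    refine ⟨hN0inf, hN0L, by simp, ?_⟩
    intro t ht
    rw [Finset.subset_empty] at ht
    subst ht
    exact hN0dec ∅ (Finset.mem_singleton_self _)
  have hstep : ∀ q, Inv q → ∃ q', Inv q' ∧ Rel q q' := by
    rintro ⟨Fi, Mi⟩ ⟨hinf, hsubL, hpt, hdec⟩
    set m : ℕ := sInf Mi with hmdef
    have hmMi : m ∈ Mi := Nat.sInf_mem hinf.nonempty
    have hM1inf : {n | n ∈ Mi ∧ m < n}.Infinite := by
      refine (hinf.diff (Set.finite_Iic m)).mono ?_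
      intro x hx
      exact ⟨hx.1, not_le.mp hx.2⟩
    obtain ⟨N, hNM1, hNinf, hNdec⟩ := decide_family B ((insert m Fi).powerset) _ hM1inf
    refine ⟨(insert m Fi, N), ⟨hNinf, ?_, ?_, ?_⟩, ?_, rfl, fun n hn => (hNM1 hn).2⟩
    · exact fun x hx => hsubL (hNM1 hx).1
    · intro a ha n hn
      rcases Finset.mem_insert.mp ha with rfl | ha
      · exact (hNM1 hn).2
      · exact hpt a ha n (hNM1 hn).1
    · intro t ht
      exact hNdec t (Finset.mem_powerset.mpr ht)
    · exact fun x hx => (hNM1 hx).1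
  obtain ⟨f, hf0, hfInv, hfR⟩ := rec_chain Inv Rel _ h0 hstep
  set m : ℕ → ℕ := fun n => sInf (f n).2 with hm
  have hm_mem : ∀ n, m n ∈ (f n).2 := fun n => Nat.sInf_mem (hfInv n).1.nonempty
  have hsub_succ : ∀ n, (f (n + 1)).2 ⊆ (f n).2 := fun n => (hfR n).1
  have hfst : ∀ n, (f (n + 1)).1 = insert (m n) (f n).1 := fun n => (hfR n).2.1
  have hgt : ∀ n, ∀ x ∈ (f (n + 1)).2, m n < x := fun n => (hfR n).2.2
  have hanti : ∀ i j, i ≤ j → (f j).2 ⊆ (f i).2 := by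
    intro i j hij
    induction j, hij using Nat.le_induction with
    | base => exact subset_rfl
    | succ n hn ih => exact (hsub_succ n).trans ih
  have hmono : StrictMono m :=
    strictMono_nat_of_lt_succ (fun n => hgt n _ (hm_mem (n + 1)))
  have hfst_eq : ∀ n, (f n).1 = (Finset.range n).image m := by
    intro n
    induction n with
    | zero => rw [hf0]; simp
    | succ n ih => rw [hfst, ih, Finset.range_add_one, Finset.image_insert]
  have hrange_sub : ∀ i, Set.range m ⊆ (f i).2 ∪ (m '' Set.Iio i) := by
    rintro i _ ⟨j, rfl⟩
    by_cases hj : j < i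
    · exact Or.inr ⟨j, hj, rfl⟩
    · exact Or.inl (hanti i j (not_lt.mp hj) (hm_mem j))
  have hMinf : (Set.range m).Infinite := Set.infinite_range_of_injective hmono.injective
  have hML0 : Set.range m ⊆ L0 := by
    rintro _ ⟨j, rfl⟩
    exact (hfInv j).2.1 (hm_mem j)
  refine ⟨Set.range m, hML0, hMinf, ?_⟩
  intro s hs
  -- find a stage i with s ⊆ (f i).1 and above s (range m) ⊆ (f i).2
  have hstage : ∃ i, s ⊆ (f i).1 ∧ above s (Set.range m) ⊆ (f i).2 := by
    rcases s.eq_empty_or_nonempty with rfl | hne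
    · refine ⟨0, Finset.empty_subset _, ?_⟩
      intro x hx
      obtain ⟨j, rfl⟩ := hx.1
      exact hanti 0 j (Nat.zero_le j) (hm_mem j)
    · have hmax : s.max' hne ∈ Set.range m := hs (Finset.mem_coe.mpr (s.max'_mem hne))
      obtain ⟨i, hi⟩ := hmax
      refine ⟨i + 1, ?_, ?_⟩
      · intro x hx
        obtain ⟨j, rfl⟩ := hs (Finset.mem_coe.mpr hx)
        have : m j ≤ m i := hi ▸ Finset.le_max' s _ hx
        rw [hfst_eq]
        exact Finset.mem_image.mpr ⟨j, Finset.mem_range.mpr (Nat.lt_succ_of_le (hmono.le_iff_le.mp this)), rfl⟩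
      · rintro x ⟨⟨j, rfl⟩, hgt'⟩
        have : m i < m j := hi ▸ hgt' _ (s.max'_mem hne)
        exact hanti (i + 1) j (hmono.lt_iff_lt.mp this) (hm_mem j)
  obtain ⟨i, hsi, habove⟩ := hstage
  rcases (hfInv i).2.2.2 s hsi with h | h
  · exact Or.inl (acc_transfer habove h)
  · exact Or.inr (rej_transfer habove h)



lemma exists_reject_set (B : Set (Finset ℕ)) {M : Set ℕ} (hM : M.Infinite)
    (hdec : ∀ s : Finset ℕ, ↑s ⊆ M → GAcc B s M ∨ GRej B s M)
    (hrej : GRej B ∅ M) :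
    ∃ N, N ⊆ M ∧ N.Infinite ∧ ∀ s : Finset ℕ, ↑s ⊆ N → GRej B s M := by
  classical
  set Inv2 : Finset ℕ → Prop := fun Fi => ↑Fi ⊆ M ∧ ∀ s ⊆ Fi, GRej B s M with hInv2
  set Rel2 : Finset ℕ → Finset ℕ → Prop :=
    fun Fi Fi' => ∃ x, x ∈ M ∧ (∀ a ∈ Fi, a < x) ∧ Fi' = insert x Fi with hRel2
  have h0 : Inv2 ∅ := by
    refine ⟨by simp, ?_⟩
    intro s hs
    rw [Finset.subset_empty] at hs
    subst hs
    exact hrej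
  have hstep : ∀ Fi, Inv2 Fi → ∃ Fi', Inv2 Fi' ∧ Rel2 Fi Fi' := by
    rintro Fi ⟨hFiM, hFirej⟩
    set Bad : Set ℕ := ⋃ s ∈ Fi.powerset, {x | x ∈ above s M ∧ GAcc B (insert x s) M} with hBad
    have hBadfin : Bad.Finite :=
      Set.Finite.biUnion (Fi.powerset.finite_toSet)
        (fun s hs => key_finite B s (hFirej s (Finset.mem_powerset.mp hs)))
    obtain ⟨x, hx⟩ := (hM.diff (hBadfin.union (Set.finite_Iic (Fi.sup id)))).nonempty
    have hxM : x ∈ M := hx.1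
    have hxBad : x ∉ Bad := fun h => hx.2 (Or.inl h)
    have hxgt : ∀ a ∈ Fi, a < x := fun a ha =>
      lt_of_le_of_lt (Finset.le_sup (f := id) ha) (not_le.mp (fun h => hx.2 (Or.inr h)))
    refine ⟨insert x Fi, ⟨?_, ?_⟩, x, hxM, hxgt, rfl⟩
    · intro y hy
      rcases Finset.mem_insert.mp (Finset.mem_coe.mp hy) with rfl | hy
      · exact hxM
      · exact hFiM (Finset.mem_coe.mpr hy)
    · intro s hs
      by_cases hxs : x ∈ s
      · have hsub' : s.erase x ⊆ Fi := Finset.subset_insert_iff.mp hs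
        have hsM : ↑s ⊆ M := by
          intro y hy
          rcases Finset.mem_insert.mp (hs (Finset.mem_coe.mp hy)) with rfl | hy'
          · exact hxM
          · exact hFiM (Finset.mem_coe.mpr hy')
        have hnacc : ¬ GAcc B (insert x (s.erase x)) M := by
          intro hacc
          refine hxBad (Set.mem_biUnion (Finset.mem_coe.mpr (Finset.mem_powerset.mpr hsub')) ?_)
          exact ⟨⟨hxM, fun a ha => hxgt a (hsub' ha)⟩, hacc⟩
        rw [Finset.insert_erase hxs] at hnacc
        exact (hdec s hsM).resolve_left hnacc
      · exact hFirej s ((Finset.subset_insert_iff_of_notMem hxs).mp hs)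
  obtain ⟨g, hg0, hgInv, hgR⟩ := rec_chain Inv2 Rel2 ∅ h0 hstep
  choose x hxM hxgt hxins using hgR
  have hmem : ∀ i, x i ∈ g (i + 1) := fun i => (hxins i) ▸ Finset.mem_insert_self _ _
  have hgsub : ∀ i j, i ≤ j → g i ⊆ g j := by
    intro i j hij
    induction j, hij using Nat.le_induction with
    | base => exact subset_rfl
    | succ n hn ih => exact ih.trans (by rw [hxins n]; exact Finset.subset_insert _ _)
  have hxmono : StrictMono x := strictMono_nat_of_lt_succ fun i => hxgt (i + 1) (x i) (hmem i)
  refine ⟨Set.range x, ?_, Set.infinite_range_of_injective hxmono.injective, ?_⟩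
  · rintro _ ⟨i, rfl⟩; exact hxM i
  · intro s hs
    have hfind : ∃ j, s ⊆ g j := by
      classical
      induction s using Finset.induction_on with
      | empty => exact ⟨0, Finset.empty_subset _⟩
      | insert _ _ hna ih =>
        rename_i a s'
        have hs' : ↑s' ⊆ Set.range x := fun y hy => hs (Finset.mem_coe.mpr (Finset.mem_insert_of_mem hy))
        obtain ⟨j₁, hj₁⟩ := ih hs'
        obtain ⟨i, rfl⟩ := hs (Finset.mem_coe.mpr (Finset.mem_insert_self a s'))
        refine ⟨max j₁ (i + 1), Finset.insert_subset ?_ (hj₁.trans (hgsub _ _ (le_max_left _ _)))⟩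
        exact hgsub (i + 1) _ (le_max_right _ _) (hmem i)
    obtain ⟨j, hj⟩ := hfind
    exact (hgInv j).2 s hj

lemma segS_comparable {u t : Finset ℕ} {X : Set ℕ} (hu : segS u X) (ht : segS t X) :
    IsInitialSegment u t ∨ IsInitialSegment t u := by
  have hsub : u ⊆ t ∨ t ⊆ u := by
    by_contra h
    push_neg at h
    obtain ⟨a, hau, hat⟩ := Finset.not_subset.mp h.1
    obtain ⟨b, hbt, hbu⟩ := Finset.not_subset.mp h.2
    have h1 : a < b := hu.2 b (ht.1 (Finset.mem_coe.mpr hbt)) hbu a hau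
    have h2 : b < a := ht.2 a (hu.1 (Finset.mem_coe.mpr hau)) hat b hbt
    omega
  rcases hsub with h | h
  · exact Or.inl ⟨h, fun a ha b hb hbu => hu.2 b (ht.1 (Finset.mem_coe.mpr hb)) hbu a ha⟩
  · exact Or.inr ⟨h, fun a ha b hb hbt => ht.2 b (hu.1 (Finset.mem_coe.mpr hb)) hbt a ha⟩

lemma NW2 (F B : Set (Finset ℕ))
    (hthin : ∀ s ∈ F, ∀ t ∈ F, IsInitialSegment s t → s = t)
    (L0 : Set ℕ) (hL0 : L0.Infinite) :
    ∃ N, N ⊆ L0 ∧ N.Infinite ∧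
      ((∀ u ∈ F, ↑u ⊆ N → u ∈ B) ∨ (∀ u ∈ F, ↑u ⊆ N → u ∉ B)) := by
  obtain ⟨M, hML, hMinf, hdec⟩ := exists_decider (B ∩ F) L0 hL0
  by_cases hacc : GAcc (B ∩ F) ∅ M
  · refine ⟨M, hML, hMinf, Or.inl ?_⟩
    intro u hu hsub
    set X : Set ℕ := ↑u ∪ above u M with hX
    have hXinf : X.Infinite := (above_infinite hMinf u).mono Set.subset_union_right
    have hXM : X ⊆ ↑(∅ : Finset ℕ) ∪ above ∅ M := by
      intro y hy
      refine Or.inr ⟨?_, by simp⟩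
      rcases hy with hy | hy
      · exact hsub hy
      · exact hy.1
    have hseg0 : segS ∅ X := ⟨by simp, by simp⟩
    obtain ⟨t, htB, htseg⟩ := hacc X hXinf hXM hseg0
    have huseg : segS u X := by
      refine ⟨Set.subset_union_left, ?_⟩
      intro n hn hnu a ha
      rcases hn with hn | hn
      · exact absurd (Finset.mem_coe.mp hn) hnu
      · exact hn.2 a ha
    rcases segS_comparable huseg htseg with h | h
    · rw [hthin u hu t htB.2 h]; exact htB.1
    · rw [← hthin t htB.2 u hu h]; exact htB.1
  · have hrej0 : GRej (B ∩ F) ∅ M := (hdec ∅ (by simp)).resolve_left hacc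
    obtain ⟨N, hNM, hNinf, hNrej⟩ := exists_reject_set (B ∩ F) hMinf hdec hrej0
    refine ⟨N, hNM.trans hML, hNinf, Or.inr ?_⟩
    intro u hu hsub hmemB
    exact hNrej u hsub M subset_rfl hMinf (acc_of_mem ⟨hmemB, hu⟩)

lemma NWp (F : Set (Finset ℕ))
    (hthin : ∀ s ∈ F, ∀ t ∈ F, IsInitialSegment s t → s = t)
    (c : Finset ℕ → ℕ) :
    ∀ p : ℕ, 1 ≤ p → ∀ L0 : Set ℕ, L0.Infinite → (∀ u ∈ F, ↑u ⊆ L0 → c u < p) →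
      ∃ N, N ⊆ L0 ∧ N.Infinite ∧ ∃ i < p, ∀ u ∈ F, ↑u ⊆ N → c u = i := by
  intro p
  induction p with
  | zero => omega
  | succ q ih =>
    intro _ L0 hL0 hc
    obtain ⟨N, hNL, hNinf, hor⟩ := NW2 F {u | c u = q} hthin L0 hL0
    rcases hor with h | h
    · exact ⟨N, hNL, hNinf, q, Nat.lt_succ_self q, fun u hu hsub => h u hu hsub⟩
    · rcases Nat.eq_zero_or_pos q with rfl | hq
      · refine ⟨N, hNL, hNinf, 0, Nat.lt_succ_self 0, fun u hu hsub => ?_⟩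
        have h1 := hc u hu (hsub.trans hNL)
        have h2 := h u hu hsub
        simp only [Set.mem_setOf_eq] at h2
        omega
      · obtain ⟨N', hN'N, hN'inf, i, hi, hmono⟩ :=
          ih hq N hNinf (fun u hu hsub => by
            have h1 := hc u hu (hsub.trans hNL)
            have h2 := h u hu hsub
            simp only [Set.mem_setOf_eq] at h2
            omega)
        exact ⟨N', hN'N.trans hNL, hN'inf, i, hi.trans (Nat.lt_succ_self q), hmono⟩



def IsDecompN (F : Set (Finset ℕ)) (k : ℕ) (f : ℕ → Finset ℕ) (u : Finset ℕ) : Prop :=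
  (∀ j < k, f j ∈ F) ∧ (∀ i j, i < j → j < k → ∀ a ∈ f i, ∀ b ∈ f j, a < b) ∧
    u = (Finset.range k).biUnion f

lemma decomp_first_seg {F k f u} (h : IsDecompN F (k + 1) f u) : IsInitialSegment (f 0) u := by
  constructor
  · intro y hy
    rw [h.2.2]
    exact Finset.mem_biUnion.mpr ⟨0, Finset.mem_range.mpr (Nat.succ_pos k), hy⟩
  · intro a ha b hb hb0
    rw [h.2.2] at hb
    obtain ⟨j, hj, hbj⟩ := Finset.mem_biUnion.mp hb
    have hj0 : 0 < j := Nat.pos_of_ne_zero (fun hje => hb0 (hje ▸ hbj))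
    exact h.2.1 0 j hj0 (Finset.mem_range.mp hj) a ha b hbj

lemma decomp_tail {F k f u} (h : IsDecompN F (k + 1) f u) :
    IsDecompN F k (fun j => f (j + 1)) (u \ f 0) := by
  refine ⟨fun j hj => h.1 (j + 1) (by omega),
    fun i j hij hjk => h.2.1 (i + 1) (j + 1) (by omega) (by omega), ?_⟩
  ext y
  simp only [Finset.mem_sdiff, h.2.2, Finset.mem_biUnion, Finset.mem_range]
  constructor
  · rintro ⟨⟨j, hj, hy⟩, hy0⟩
    have hjne : j ≠ 0 := fun hje => hy0 (hje ▸ hy)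
    exact ⟨j - 1, by omega, by rwa [Nat.sub_add_cancel (by omega)]⟩
  · rintro ⟨j, hj, hy⟩
    refine ⟨⟨j + 1, by omega, hy⟩, fun hy0 => ?_⟩
    exact lt_irrefl y (h.2.1 0 (j + 1) (by omega) (by omega) y hy0 y hy)

lemma seg_trans {u s t : Finset ℕ} (h1 : IsInitialSegment u s) (h2 : IsInitialSegment s t) :
    IsInitialSegment u t := by
  refine ⟨h1.1.trans h2.1, ?_⟩
  intro a ha b hb hbu
  by_cases hbs : b ∈ s
  · exact h1.2 a ha b hbs hbu
  · exact h2.2 a (h1.1 ha) b hb hbs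

lemma IS_comparable {u v w : Finset ℕ} (hu : IsInitialSegment u w) (hv : IsInitialSegment v w) :
    IsInitialSegment u v ∨ IsInitialSegment v u := by
  have hsub : u ⊆ v ∨ v ⊆ u := by
    by_contra h
    push_neg at h
    obtain ⟨a, hau, hav⟩ := Finset.not_subset.mp h.1
    obtain ⟨b, hbv, hbu⟩ := Finset.not_subset.mp h.2
    have h1 : a < b := hu.2 a hau b (hv.1 hbv) hbu
    have h2 : b < a := hv.2 b hbv a (hu.1 hau) hav
    omega
  rcases hsub with h | h
  · exact Or.inl ⟨h, fun a ha b hb hbu => hu.2 a ha b (hv.1 hb) hbu⟩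
  · exact Or.inr ⟨h, fun a ha b hb hbv => hv.2 a ha b (hu.1 hb) hbv⟩

lemma decomp_unique {F : Set (Finset ℕ)}
    (hthin : ∀ s ∈ F, ∀ t ∈ F, IsInitialSegment s t → s = t) :
    ∀ (k : ℕ) (f g : ℕ → Finset ℕ) (u : Finset ℕ),
      IsDecompN F k f u → IsDecompN F k g u → ∀ j < k, f j = g j := by
  intro k
  induction k with
  | zero => intro f g u _ _ j hj; omega
  | succ n ih =>
    intro f g u hf hg
    have h0 : f 0 = g 0 := by
      rcases IS_comparable (decomp_first_seg hf) (decomp_first_seg hg) with h | h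
      · exact hthin _ (hf.1 0 (Nat.succ_pos n)) _ (hg.1 0 (Nat.succ_pos n)) h
      · exact (hthin _ (hg.1 0 (Nat.succ_pos n)) _ (hf.1 0 (Nat.succ_pos n)) h).symm
    have htg : IsDecompN F n (fun j => g (j + 1)) (u \ f 0) := h0 ▸ decomp_tail hg
    have := ih _ _ _ (decomp_tail hf) htg
    intro j hj
    rcases Nat.eq_zero_or_pos j with rfl | hjpos
    · exact h0
    · have := this (j - 1) (by omega)
      simpa [Nat.sub_add_cancel hjpos] using this

lemma FK_thin {F : Set (Finset ℕ)}
    (hthin : ∀ s ∈ F, ∀ t ∈ F, IsInitialSegment s t → s = t) :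
    ∀ (k : ℕ) (u w : Finset ℕ) (f g : ℕ → Finset ℕ),
      IsDecompN F k f u → IsDecompN F k g w → IsInitialSegment u w → u = w := by
  intro k
  induction k with
  | zero =>
    intro u w f g hf hg _
    rw [hf.2.2, hg.2.2]
    simp
  | succ n ih =>
    intro u w f g hf hg huw
    have hfu : IsInitialSegment (f 0) u := decomp_first_seg hf
    have hgw : IsInitialSegment (g 0) w := decomp_first_seg hg
    have h0 : f 0 = g 0 := by
      rcases IS_comparable (seg_trans hfu huw) hgw with h | h
      · exact hthin _ (hf.1 0 (Nat.succ_pos n)) _ (hg.1 0 (Nat.succ_pos n)) h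
      · exact (hthin _ (hg.1 0 (Nat.succ_pos n)) _ (hf.1 0 (Nat.succ_pos n)) h).symm
    have hsegdiff : IsInitialSegment (u \ f 0) (w \ g 0) := by
      rw [← h0]
      constructor
      · intro y hy
        rw [Finset.mem_sdiff] at hy ⊢
        exact ⟨huw.1 hy.1, hy.2⟩
      · intro a ha b hb hbu
        rw [Finset.mem_sdiff] at ha hb
        have hbnu : b ∉ u := fun hbU => hbu (Finset.mem_sdiff.mpr ⟨hbU, hb.2⟩)
        exact huw.2 a ha.1 b hb.1 hbnu
    have hdiff : u \ f 0 = w \ g 0 := ih _ _ _ _ (decomp_tail hf) (decomp_tail hg) hsegdiff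
    have h1 : u \ f 0 ∪ f 0 = u := Finset.sdiff_union_of_subset hfu.1
    have h2 : w \ g 0 ∪ g 0 = w := Finset.sdiff_union_of_subset hgw.1
    rw [← h1, ← h2, hdiff, h0]

end NWaux


/-- Proposition 28: Ramsey property for block tuples. -/
theorem statement17 (F : Set (Finset ℕ)) (hF : RegularThin F)
    (L : ℕ → ℕ) (hL : StrictMono L) (k : ℕ) (hk : 1 ≤ k)
    (p : ℕ) (hp : 1 ≤ p) (col : (Fin k → Finset ℕ) → ℕ) (hcol : ∀ s, col s < p) :
    ∃ L' : ℕ → ℕ, StrictMono L' ∧ Set.range L' ⊆ Set.range L ∧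
      ∃ i₀ < p, ∀ s : Fin k → Finset ℕ, (∀ j, s j ∈ restrict F L') →
        (∀ i j : Fin k, i < j → ∀ a ∈ s i, ∀ b ∈ s j, a < b) →
        col s = i₀ := by
  classical
  obtain ⟨R, hR, hFeq⟩ := hF
  have hanti : ∀ s ∈ F, ∀ t ∈ F, s ⊆ t → s = t := by
    intro s hs t ht hst
    rw [hFeq] at hs ht
    exact hs.2 t ht.1 hst
  have hthin : ∀ s ∈ F, ∀ t ∈ F, IsInitialSegment s t → s = t :=
    fun s hs t ht h => hanti s hs t ht h.1
  set FK : Set (Finset ℕ) := {u | ∃ f : ℕ → Finset ℕ, NWaux.IsDecompN F k f u} with hFKdef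
  have hFKthin : ∀ u ∈ FK, ∀ w ∈ FK, IsInitialSegment u w → u = w := by
    rintro u ⟨f, hf⟩ w ⟨g, hg⟩ h
    exact NWaux.FK_thin hthin k u w f g hf hg h
  set c : Finset ℕ → ℕ :=
    fun u => if h : u ∈ FK then col (fun j : Fin k => h.choose (j : ℕ)) else 0 with hcdef
  have hcp : ∀ u, c u < p := by
    intro u
    by_cases h : u ∈ FK
    · have h1 : c u = col (fun j : Fin k => h.choose (j : ℕ)) := dif_pos h
      rw [h1]; exact hcol _
    · have h1 : c u = 0 := dif_neg h
      rw [h1]; exact hp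
  have hrangeinf : (Set.range L).Infinite := Set.infinite_range_of_injective hL.injective
  obtain ⟨N, hNL, hNinf, i₀, hi₀, hmono⟩ :=
    NWaux.NWp FK hFKthin c p hp (Set.range L) hrangeinf (fun u _ _ => hcp u)
  have hNinf' : (setOf (· ∈ N)).Infinite := hNinf
  refine ⟨Nat.nth (· ∈ N), Nat.nth_strictMono hNinf', ?_, i₀, hi₀, ?_⟩
  · rintro _ ⟨j, rfl⟩
    exact hNL (Nat.nth_mem_of_infinite hNinf' j)
  · intro s hs hblocks
    have hL'range : Set.range (Nat.nth (· ∈ N)) ⊆ N := by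
      rintro _ ⟨j, rfl⟩
      exact Nat.nth_mem_of_infinite hNinf' j
    set f : ℕ → Finset ℕ := fun j => if h : j < k then s ⟨j, h⟩ else ∅ with hfdef
    set u : Finset ℕ := (Finset.range k).biUnion f with hudef
    have hdu : NWaux.IsDecompN F k f u := by
      refine ⟨?_, ?_, rfl⟩
      · intro j hj
        have h1 : f j = s ⟨j, hj⟩ := dif_pos hj
        rw [h1]
        exact (hs ⟨j, hj⟩).1
      · intro i j hij hjk a ha b hb
        have hik : i < k := hij.trans hjk
        rw [show f i = s ⟨i, hik⟩ from dif_pos hik] at ha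
        rw [show f j = s ⟨j, hjk⟩ from dif_pos hjk] at hb
        exact hblocks ⟨i, hik⟩ ⟨j, hjk⟩ (Fin.mk_lt_mk.mpr hij) a ha b hb
    have humem : u ∈ FK := ⟨f, hdu⟩
    have husub : ↑u ⊆ N := by
      intro y hy
      obtain ⟨j, hj, hyj⟩ := Finset.mem_biUnion.mp (Finset.mem_coe.mp hy)
      have hjk := Finset.mem_range.mp hj
      rw [show f j = s ⟨j, hjk⟩ from dif_pos hjk] at hyj
      exact hL'range ((hs ⟨j, hjk⟩).2 (Finset.mem_coe.mpr hyj))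
    have hcu : c u = i₀ := hmono u humem husub
    have hcu' : col (fun j : Fin k => humem.choose (j : ℕ)) = i₀ := by
      rw [show c u = col (fun j : Fin k => humem.choose (j : ℕ)) from dif_pos humem] at hcu
      exact hcu
    have hfix : (fun j : Fin k => humem.choose (j : ℕ)) = s := by
      funext j
      have h1 := NWaux.decomp_unique hthin k humem.choose f u humem.choose_spec hdu j j.isLt
      rw [h1, show f (j : ℕ) = s ⟨(j : ℕ), j.isLt⟩ from dif_pos j.isLt]
    rw [← hfix]
    exact hcu'
end
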